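/- Let A be a real 3×3 symmetric matrix with trace zero and let v ∈ ℝ³. Then 12·‖A v‖² ≤ 8·( Σ_{i,j} A_{ij}² )·‖v‖², where ‖Av‖ and ‖v‖ are Euclidean norms and the middle factor is the squared Frobenius norm of A. Moreover, if equality holds and v ≠ 0, then A has at most two distinct eigenvalues. -/

import Mathlib

set_option maxHeartbeats 2000000

open Polynomial Matrix

private lemma quad_param (p q : ℝ) (hp : 0 ≤ p) (h : ∀ t : ℝ, 0 ≤ p*t^2 + q*t) : q = 0 := by
  by_contra hq
  have hp1 : (0:ℝ) < p + 1 := by linarith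
  have h1 := h (-q/(p+1))
  have h2 : (p*(-q/(p+1))^2 + q*(-q/(p+1))) * (p+1)^2 = -q^2 := by
    field_simp
    ring
  have h3 : 0 ≤ -q^2 := h2 ▸ mul_nonneg h1 (by positivity)
  have h4 : 0 < q^2 := by positivity
  linarith

private lemma aux_Q (a b d e f x y z : ℝ) :
    12*((a*x + d*y + e*z)^2 + (d*x + b*y + f*z)^2 + (e*x + f*y + -(a + b)*z)^2) ≤ 8*(a^2 + d^2 + e^2 + d^2 + b^2 + f^2 + e^2 + f^2 + (a+b)^2)*(x^2 + y^2 + z^2) := by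
  have key : 8*(a^2 + d^2 + e^2 + d^2 + b^2 + f^2 + e^2 + f^2 + (a+b)^2)*(x^2 + y^2 + z^2) - 12*((a*x + d*y + e*z)^2 + (d*x + b*y + f*z)^2 + (e*x + f*y + -(a + b)*z)^2) =
      8*(d*z - e*y)^2 + 8*(f*x - d*z)^2 + 8*(e*y - f*x)^2
      + 4*((b-a)*z + e*x - f*y)^2 + 4*((2*a+b)*y - d*x + f*z)^2
      + 4*((a+2*b)*x - d*y + e*z)^2 := by ring
  have pos : (0:ℝ) ≤ 8*(d*z - e*y)^2 + 8*(f*x - d*z)^2 + 8*(e*y - f*x)^2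
      + 4*((b-a)*z + e*x - f*y)^2 + 4*((2*a+b)*y - d*x + f*z)^2
      + 4*((a+2*b)*x - d*y + e*z)^2 := by positivity
  linarith [key, pos]

private lemma scalar_eq (a b d e f x y z : ℝ)
    (heq : 12*((a*x + d*y + e*z)^2 + (d*x + b*y + f*z)^2 + (e*x + f*y + -(a + b)*z)^2) = 8*(a^2 + d^2 + e^2 + d^2 + b^2 + f^2 + e^2 + f^2 + (a+b)^2)*(x^2 + y^2 + z^2))
    (hv : ¬(x = 0 ∧ y = 0 ∧ z = 0)) :
    4*(a*b - d^2 + (a*(-(a+b)) - e^2) + (b*(-(a+b)) - f^2))^3 + 27*(-(a*(b*(-(a+b)) - f*f) - d*(d*(-(a+b)) - f*e) + e*(d*f - b*e)))^2 = 0 := by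
  have hQ0 : 8*(a^2 + d^2 + e^2 + d^2 + b^2 + f^2 + e^2 + f^2 + (a+b)^2)*(x^2 + y^2 + z^2) - 12*((a*x + d*y + e*z)^2 + (d*x + b*y + f*z)^2 + (e*x + f*y + -(a + b)*z)^2) = 0 := by linarith
  have hL0 : ∀ t : ℝ, 0 ≤ (8*(a^2 + d^2 + e^2 + d^2 + b^2 + f^2 + e^2 + f^2 + (a+b)^2) - 12*(a^2 + d^2 + e^2))*t^2 + (16*(a^2 + d^2 + e^2 + d^2 + b^2 + f^2 + e^2 + f^2 + (a+b)^2)*x - 24*(a*(a*x + d*y + e*z) + d*(d*x + b*y + f*z) + e*(e*x + f*y + -(a + b)*z)))*t := by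
    intro t
    nlinarith [aux_Q a b d e f (x+t) y z, hQ0]
  have hL1 : ∀ t : ℝ, 0 ≤ (8*(a^2 + d^2 + e^2 + d^2 + b^2 + f^2 + e^2 + f^2 + (a+b)^2) - 12*(d^2 + b^2 + f^2))*t^2 + (16*(a^2 + d^2 + e^2 + d^2 + b^2 + f^2 + e^2 + f^2 + (a+b)^2)*y - 24*(d*(a*x + d*y + e*z) + b*(d*x + b*y + f*z) + f*(e*x + f*y + -(a + b)*z)))*t := by
    intro t
    nlinarith [aux_Q a b d e f x (y+t) z, hQ0]
  have hL2 : ∀ t : ℝ, 0 ≤ (8*(a^2 + d^2 + e^2 + d^2 + b^2 + f^2 + e^2 + f^2 + (a+b)^2) - 12*(e^2 + f^2 + (a+b)^2))*t^2 + (16*(a^2 + d^2 + e^2 + d^2 + b^2 + f^2 + e^2 + f^2 + (a+b)^2)*z - 24*(e*(a*x + d*y + e*z) + f*(d*x + b*y + f*z) + (-(a+b))*(e*x + f*y + -(a + b)*z)))*t := by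
    intro t
    nlinarith [aux_Q a b d e f x y (z+t), hQ0]
  have l0 : (16*(a^2 + d^2 + e^2 + d^2 + b^2 + f^2 + e^2 + f^2 + (a+b)^2)*x - 24*(a*(a*x + d*y + e*z) + d*(d*x + b*y + f*z) + e*(e*x + f*y + -(a + b)*z))) = 0 := quad_param _ _ (by nlinarith [aux_Q a b d e f 1 0 0]) hL0
  have l1 : (16*(a^2 + d^2 + e^2 + d^2 + b^2 + f^2 + e^2 + f^2 + (a+b)^2)*y - 24*(d*(a*x + d*y + e*z) + b*(d*x + b*y + f*z) + f*(e*x + f*y + -(a + b)*z))) = 0 := quad_param _ _ (by nlinarith [aux_Q a b d e f 0 1 0]) hL1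
  have l2 : (16*(a^2 + d^2 + e^2 + d^2 + b^2 + f^2 + e^2 + f^2 + (a+b)^2)*z - 24*(e*(a*x + d*y + e*z) + f*(d*x + b*y + f*z) + (-(a+b))*(e*x + f*y + -(a + b)*z))) = 0 := quad_param _ _ (by nlinarith [aux_Q a b d e f 0 0 1]) hL2
  have hDx : (4*(a*b - d^2 + (a*(-(a+b)) - e^2) + (b*(-(a+b)) - f^2))^3 + 27*(-(a*(b*(-(a+b)) - f*f) - d*(d*(-(a+b)) - f*e) + e*(d*f - b*e)))^2) * x = 0 := by
    linear_combination ((-1:ℝ)/8*((3*(d*d+b*b+f*f) - 2*(a^2 + d^2 + e^2 + d^2 + b^2 + f^2 + e^2 + f^2 + (a+b)^2))*(3*(e*e+f*f+(a+b)*(a+b)) - 2*(a^2 + d^2 + e^2 + d^2 + b^2 + f^2 + e^2 + f^2 + (a+b)^2)) - (3*(d*e+b*f+f*(-(a+b))))*(3*(d*e+b*f+f*(-(a+b))))))*l0 + ((-1:ℝ)/8*(-((3*(a*d+d*b+e*f))*(3*(e*e+f*f+(a+b)*(a+b)) - 2*(a^2 + d^2 + e^2 + d^2 + b^2 + f^2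 + e^2 + f^2 + (a+b)^2)) - (3*(a*e+d*f+e*(-(a+b))))*(3*(d*e+b*f+f*(-(a+b)))))))*l1 + ((-1:ℝ)/8*((3*(a*d+d*b+e*f))*(3*(d*e+b*f+f*(-(a+b)))) - (3*(a*e+d*f+e*(-(a+b))))*(3*(d*d+b*b+f*f) - 2*(a^2 + d^2 + e^2 + d^2 + b^2 + f^2 + e^2 + f^2 + (a+b)^2))))*l2
  have hDy : (4*(a*b - d^2 + (a*(-(a+b)) - e^2) + (b*(-(a+b)) - f^2))^3 + 27*(-(a*(b*(-(a+b)) - f*f) - d*(d*(-(a+b)) - f*e) + e*(d*f - b*e)))^2) * y = 0 := by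
    linear_combination ((-1:ℝ)/8*(-((3*(a*d+d*b+e*f))*(3*(e*e+f*f+(a+b)*(a+b)) - 2*(a^2 + d^2 + e^2 + d^2 + b^2 + f^2 + e^2 + f^2 + (a+b)^2)) - (3*(d*e+b*f+f*(-(a+b))))*(3*(a*e+d*f+e*(-(a+b)))))))*l0 + ((-1:ℝ)/8*((3*(a*a+d*d+e*e) - 2*(a^2 + d^2 + e^2 + d^2 + b^2 + f^2 + e^2 + f^2 + (a+b)^2))*(3*(e*e+f*f+(a+b)*(a+b)) - 2*(a^2 + d^2 + e^2 + d^2 + b^2 + f^2 + e^2 + f^2 + (a+b)^2)) - (3*(a*e+d*f+e*(-(a+b))))*(3*(a*e+d*f+e*(-(a+b))))))*l1 + ((-1:ℝ)/8*(-((3*(a*a+d*d+e*e) - 2*(a^2 + d^2 + e^2 + d^2 + b^2 + f^2 + e^2 + f^2 + (a+b)^2))*(3*(d*e+b*f+f*(-(a+b)))) - (3*(a*e+d*f+e*(-(a+b))))*(3*(a*d+d*b+e*f)))))*l2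
  have hDz : (4*(a*b - d^2 + (a*(-(a+b)) - e^2) + (b*(-(a+b)) - f^2))^3 + 27*(-(a*(b*(-(a+b)) - f*f) - d*(d*(-(a+b)) - f*e) + e*(d*f - b*e)))^2) * z = 0 := by
    linear_combination ((-1:ℝ)/8*((3*(a*d+d*b+e*f))*(3*(d*e+b*f+f*(-(a+b)))) - (3*(d*d+b*b+f*f) - 2*(a^2 + d^2 + e^2 + d^2 + b^2 + f^2 + e^2 + f^2 + (a+b)^2))*(3*(a*e+d*f+e*(-(a+b))))))*l0 + ((-1:ℝ)/8*(-((3*(a*a+d*d+e*e) - 2*(a^2 + d^2 + e^2 + d^2 + b^2 + f^2 + e^2 + f^2 + (a+b)^2))*(3*(d*e+b*f+f*(-(a+b)))) - (3*(a*d+d*b+e*f))*(3*(a*e+d*f+e*(-(a+b)))))))*l1 + ((-1:ℝ)/8*((3*(a*a+d*d+e*e) - 2*(a^2 + d^2 + e^2 + d^2 + b^2 + f^2 + e^2 + f^2 + (a+b)^2))*(3*(d*d+b*b+f*f) - 2*(a^2 + d^2 + e^2 + d^2 + b^2 + f^2 + e^2 + f^2 + (a+b)^2)) - (3*(a*d+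d*b+e*f))*(3*(a*d+d*b+e*f))))*l2
  have hvor : x ≠ 0 ∨ y ≠ 0 ∨ z ≠ 0 := by tauto
  rcases hvor with h | h | h
  · exact (mul_eq_zero.mp hDx).resolve_right h
  · exact (mul_eq_zero.mp hDy).resolve_right h
  · exact (mul_eq_zero.mp hDz).resolve_right h

private lemma repeated_root (p q : ℝ) (h : 4*p^3 + 27*q^2 = 0) :
    ∃ x : ℝ, (X - C x)^2 ∣ (X^3 + C p * X + C q : ℝ[X]) := by
  by_cases hp : p = 0
  · have hq2 : q^2 = 0 := by rw [hp] at h; linarith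
    have hq : q = 0 := by nlinarith [sq_nonneg q, hq2]
    refine ⟨0, X, ?_⟩
    rw [hp, hq]
    simp
    ring
  · obtain ⟨x, hx⟩ : ∃ x : ℝ, x = -3*q/(2*p) := ⟨_, rfl⟩
    have h1 : p = -3*x^2 := by
      rw [hx]; field_simp; linear_combination h
    have h2 : q = 2*x^3 := by
      rw [hx]; field_simp; linear_combination q * h
    refine ⟨x, X + C (2*x), ?_⟩
    have hcp : C p = -3 * (C x)^2 := by
      rw [h1]; simp only [map_neg, _root_.map_mul, map_pow, map_ofNat]
    have hc2 : C (2*x) = 2 * C x := by simp only [_root_.map_mul, map_ofNat]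
    have hcq : C q = 2 * (C x)^3 := by
      rw [h2]; simp only [_root_.map_mul, map_pow, map_ofNat]
    rw [hcp, hcq, hc2]
    ring

private lemma charpoly_three (A : Matrix (Fin 3) (Fin 3) ℝ) :
    A.charpoly = X^3 - C (A 0 0 + A 1 1 + A 2 2) * X^2
      + C (A 0 0*A 1 1 - A 0 1*A 1 0 + A 0 0*A 2 2 - A 0 2*A 2 0 + A 1 1*A 2 2 - A 1 2*A 2 1) * X
      - C (A 0 0*(A 1 1*A 2 2 - A 1 2*A 2 1) - A 0 1*(A 1 0*A 2 2 - A 1 2*A 2 0)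
           + A 0 2*(A 1 0*A 2 1 - A 1 1*A 2 0)) := by
  rw [Matrix.charpoly, Matrix.det_fin_three]
  rw [charmatrix_apply_eq, charmatrix_apply_eq, charmatrix_apply_eq,
      charmatrix_apply_ne A 0 1 (by decide),
      charmatrix_apply_ne A 0 2 (by decide),
      charmatrix_apply_ne A 1 0 (by decide),
      charmatrix_apply_ne A 1 2 (by decide),
      charmatrix_apply_ne A 2 0 (by decide),
      charmatrix_apply_ne A 2 1 (by decide)]
  simp only [C_add, C_mul, C_sub, C_neg, C_pow]
  ring

/-- for a real symmetric traceless 3×3 matrix `A` and `v ∈ ℝ³`,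
`12 ‖A v‖² ≤ 8 ‖A‖²_F ‖v‖²`; if equality holds and `v ≠ 0`, then `A` has at
most two distinct eigenvalues (its characteristic polynomial has a repeated
root). -/
theorem cotton_norm_inequality (A : Matrix (Fin 3) (Fin 3) ℝ)
    (hsymm : A.IsSymm) (htrace : A.trace = 0) (v : Fin 3 → ℝ) :
    12 * (∑ i, (A.mulVec v i) ^ 2) ≤
      8 * (∑ i, ∑ j, A i j ^ 2) * (∑ i, v i ^ 2) ∧
    (12 * (∑ i, (A.mulVec v i) ^ 2) =
        8 * (∑ i, ∑ j, A i j ^ 2) * (∑ i, v i ^ 2) → v ≠ 0 →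
      ∃ x : ℝ, (Polynomial.X - Polynomial.C x) ^ 2 ∣ A.charpoly) := by
  have e10 : A 1 0 = A 0 1 := hsymm.apply 0 1
  have e20 : A 2 0 = A 0 2 := hsymm.apply 0 2
  have e21 : A 2 1 = A 1 2 := hsymm.apply 1 2
  have e22 : A 2 2 = -(A 0 0 + A 1 1) := by
    have ht := htrace
    rw [Matrix.trace_fin_three] at ht
    linarith
  simp only [Matrix.mulVec, dotProduct, Fin.sum_univ_three]
  rw [e10, e20, e21, e22]
  constructor
  · linarith [aux_Q (A 0 0) (A 1 1) (A 0 1) (A 0 2) (A 1 2) (v 0) (v 1) (v 2)]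
  · intro heq hv
    have hv' : ¬(v 0 = 0 ∧ v 1 = 0 ∧ v 2 = 0) := by
      rintro ⟨h0, h1, h2⟩
      apply hv
      funext i
      fin_cases i
      · exact h0
      · exact h1
      · exact h2
    have heq' : 12*(((A 0 0)*(v 0) + (A 0 1)*(v 1) + (A 0 2)*(v 2))^2 + ((A 0 1)*(v 0) + (A 1 1)*(v 1) + (A 1 2)*(v 2))^2 + ((A 0 2)*(v 0) + (A 1 2)*(v 1) + -((A 0 0) + (A 1 1))*(v 2))^2) = 8*((A 0 0)^2 + (A 0 1)^2 + (A 0 2)^2 + (A 0 1)^2 + (A 1 1)^2 + (A 1 2)^2 + (A 0 2)^2 + (A 1 2)^2 + ((A 0 0)+(A 1 1))^2)*((v 0)^2 + (v 1)^2 + (v 2)^2) := by linear_combination heq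
    have hD := scalar_eq (A 0 0) (A 1 1) (A 0 1) (A 0 2) (A 1 2) (v 0) (v 1) (v 2) heq' hv'
    have hchar : A.charpoly = X^3 + C ((A 0 0)*(A 1 1) - (A 0 1)^2 + ((A 0 0)*(-((A 0 0)+(A 1 1))) - (A 0 2)^2) + ((A 1 1)*(-((A 0 0)+(A 1 1))) - (A 1 2)^2)) * X + C (-((A 0 0)*((A 1 1)*(-((A 0 0)+(A 1 1))) - (A 1 2)*(A 1 2)) - (A 0 1)*((A 0 1)*(-((A 0 0)+(A 1 1))) - (A 1 2)*(A 0 2)) + (A 0 2)*((A 0 1)*(A 1 2) - (A 1 1)*(A 0 2)))) := by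
      rw [charpoly_three A, e10, e20, e21, e22]
      simp only [C_add, C_mul, C_sub, C_neg, C_pow]
      ring
    obtain ⟨x, hx⟩ := repeated_root ((A 0 0)*(A 1 1) - (A 0 1)^2 + ((A 0 0)*(-((A 0 0)+(A 1 1))) - (A 0 2)^2) + ((A 1 1)*(-((A 0 0)+(A 1 1))) - (A 1 2)^2)) (-((A 0 0)*((A 1 1)*(-((A 0 0)+(A 1 1))) - (A 1 2)*(A 1 2)) - (A 0 1)*((A 0 1)*(-((A 0 0)+(A 1 1))) - (A 1 2)*(A 0 2)) + (A 0 2)*((A 0 1)*(A 1 2) - (A 1 1)*(A 0 2)))) (by linear_combination hD)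
    refine ⟨x, ?_⟩
    rw [hchar]
    exact hx
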